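/- arXiv:2011.02735 — 3 statements merged into one kernel-verified Lean document; each statement's English description precedes it below -/
import Mathlib

section
/- Let G be a finitely generated post-critically finite (bounded) self-similar group with alphabet S and nucleus N, let ξ ∈ S^ℕ, and let Γ be the Schreier graph of the orbit G·ξ with respect to N, viewed as an undirected graph. Then Γ has finite treewidth: there exists a tree decomposition of Γ all of whose bags are finite of uniformly bounded size. -/
/-!
Statement 12: Schreier graphs of post-critically finite self-similar groups have
finite treewidth.
-/

namespace SSG

variable {G : Type} [Group G] {S : Type} [Fintype S]

/-- The state reached by `g` after reading the first `n` letters of `ξ`. -/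
def ssState (Φ : G → S → S × G) (g : G) (ξ : ℕ → S) : ℕ → G
  | 0 => g
  | n + 1 => (Φ (ssState Φ g ξ n) (ξ n)).2

/-- The action of `g` on the infinite word `ξ` determined by the self-similarity data `Φ`. -/
def ssAct (Φ : G → S → S × G) (g : G) (ξ : ℕ → S) : ℕ → S :=
  fun n => (Φ (ssState Φ g ξ n) (ξ n)).1

/-- The state reached by `g` after reading the finite word `v`. -/
def ssStateWord (Φ : G → S → S × G) : G → List S → G
  | g, [] => g
  | g, s :: v => ssStateWord Φ (Φ g s).2 v

/-- `N` absorbs all states reached by sufficiently long words (contraction property). -/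
def Contracting (Φ : G → S → S × G) (N : Finset G) : Prop :=
  ∀ g : G, ∃ n : ℕ, ∀ v : List S, n ≤ v.length → ssStateWord Φ g v ∈ N

/-- The post-critical set: inputs read along left-infinite paths in the nucleus ending at a
non-identity state. -/
def postCritical (Φ : G → S → S × G) (N : Finset G) : Set (ℕ → S) :=
  {s | ∃ g : ℕ → G, (∀ k, g k ∈ N) ∧ g 0 ≠ 1 ∧ ∀ k, (Φ (g (k + 1)) (s k)).2 = g k}

/-- The orbit of `ξ` under the group action. -/
def orbitSet (Φ : G → S → S × G) (ξ : ℕ → S) : Set (ℕ → S) :=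
  {η | ∃ g : G, ssAct Φ g ξ = η}

/-- The Schreier graph of the orbit of `ξ` with respect to `N`, viewed as an undirected
simple graph: `η` and `η'` are adjacent iff they are distinct and some `g ∈ N` maps one to
the other. -/
def schreierGraph (Φ : G → S → S × G) (N : Finset G) (ξ : ℕ → S) :
    SimpleGraph {η : ℕ → S // η ∈ orbitSet Φ ξ} :=
  SimpleGraph.fromRel fun η η' => ∃ g ∈ N, ssAct Φ g η.1 = η'.1

end SSG

set_option linter.unusedSectionVars false
set_option linter.unusedVariables false
set_option linter.unnecessarySimpa false
set_option maxHeartbeats 1000000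

namespace PCF
open SSG

variable {G : Type} [Group G] {S : Type} [Fintype S]

/-- tail from position `n` -/
def tl (n : ℕ) (η : ℕ → S) : ℕ → S := fun k => η (n + k)

@[simp] lemma tl_zero (η : ℕ → S) : tl 0 η = η := by
  funext k; simp [tl]

lemma tl_tl (a b : ℕ) (η : ℕ → S) : tl a (tl b η) = tl (b + a) η := by
  funext k; simp [tl, Nat.add_assoc]

section Alg
variable (Φ : G → S → S × G)

@[simp] lemma ssState_zero (g : G) (ξ : ℕ → S) : ssState Φ g ξ 0 = g := rfl

lemma ssState_succ (g : G) (ξ : ℕ → S) (n : ℕ) :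
    ssState Φ g ξ (n+1) = (Φ (ssState Φ g ξ n) (ξ n)).2 := rfl

lemma ssAct_apply (g : G) (ξ : ℕ → S) (n : ℕ) :
    ssAct Φ g ξ n = (Φ (ssState Φ g ξ n) (ξ n)).1 := rfl

variable (hone : ∀ s : S, Φ 1 s = (s, 1))
variable (hcoc : ∀ (g h : G) (s : S),
      Φ (g * h) s = ((Φ g (Φ h s).1).1, (Φ g (Φ h s).1).2 * (Φ h s).2))

include hone in
lemma ssState_one (ξ : ℕ → S) (n : ℕ) : ssState Φ 1 ξ n = 1 := by
  induction n with
  | zero => rfl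
  | succ n ih => rw [ssState_succ, ih, hone]

include hone in
lemma ssAct_one (ξ : ℕ → S) : ssAct Φ 1 ξ = ξ := by
  funext n; rw [ssAct_apply, ssState_one Φ hone, hone]

include hcoc in
lemma ssState_mul (g h : G) (ξ : ℕ → S) (n : ℕ) :
    ssState Φ (g * h) ξ n = ssState Φ g (ssAct Φ h ξ) n * ssState Φ h ξ n := by
  induction n with
  | zero => rfl
  | succ n ih =>
      rw [ssState_succ, ih, hcoc]
      rfl

include hcoc in
lemma ssAct_mul (g h : G) (ξ : ℕ → S) :
    ssAct Φ (g * h) ξ = ssAct Φ g (ssAct Φ h ξ) := by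
  funext n
  rw [ssAct_apply, ssState_mul Φ hcoc, hcoc]
  rfl

include hone hcoc in
lemma ssAct_inv_cancel (g : G) (η : ℕ → S) : ssAct Φ g (ssAct Φ g⁻¹ η) = η := by
  rw [← ssAct_mul Φ hcoc, mul_inv_cancel, ssAct_one Φ hone]

include hone hcoc in
lemma ssAct_cancel_inv (g : G) (η : ℕ → S) : ssAct Φ g⁻¹ (ssAct Φ g η) = η := by
  rw [← ssAct_mul Φ hcoc, inv_mul_cancel, ssAct_one Φ hone]

lemma ssState_add (g : G) (ξ : ℕ → S) (n k : ℕ) :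
    ssState Φ g ξ (n + k) = ssState Φ (ssState Φ g ξ n) (tl n ξ) k := by
  induction k with
  | zero => rfl
  | succ k ih =>
      rw [show n + (k+1) = (n+k)+1 from rfl, ssState_succ, ih, ssState_succ]
      rfl

lemma tl_ssAct (g : G) (ξ : ℕ → S) (n : ℕ) :
    tl n (ssAct Φ g ξ) = ssAct Φ (ssState Φ g ξ n) (tl n ξ) := by
  funext k
  show ssAct Φ g ξ (n + k) = _
  rw [ssAct_apply, ssState_add, ssAct_apply]
  rfl

/-- prefix determinism -/
lemma ssState_congr (g : G) {ξ ξ' : ℕ → S} (n : ℕ) (h : ∀ k < n, ξ k = ξ' k) :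
    ssState Φ g ξ n = ssState Φ g ξ' n := by
  induction n with
  | zero => rfl
  | succ n ih =>
      rw [ssState_succ, ssState_succ, ih (fun k hk => h k (Nat.lt_succ_of_lt hk)),
        h n (Nat.lt_succ_self n)]

lemma ssAct_congr (g : G) {ξ ξ' : ℕ → S} (n : ℕ) (h : ∀ k < n, ξ k = ξ' k) :
    ∀ k < n, ssAct Φ g ξ k = ssAct Φ g ξ' k := by
  intro k hk
  rw [ssAct_apply, ssAct_apply, ssState_congr Φ g k (fun j hj => h j (hj.trans hk)),
    h k hk]

lemma ssStateWord_append (g : G) (v w : List S) :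
    ssStateWord Φ g (v ++ w) = ssStateWord Φ (ssStateWord Φ g v) w := by
  induction v generalizing g with
  | nil => rfl
  | cons s v ih => simp [ssStateWord, ih]

lemma ssState_eq_word (g : G) (ξ : ℕ → S) (n : ℕ) :
    ssState Φ g ξ n = ssStateWord Φ g (List.ofFn fun i : Fin n => ξ i) := by
  induction n with
  | zero => rfl
  | succ n ih =>
      rw [List.ofFn_succ']
      simp only [List.concat_eq_append, ssStateWord_append, Fin.coe_castSucc]
      rw [← ih]
      rfl

end Alg

open SSG

variable {G : Type} [Group G] {S : Type} [Fintype S]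


/-- backward path of length `L` in `N` ending (at index 0) at `h` -/
def BPath (Φ : G → S → S × G) (N : Finset G) (L : ℕ) (h : G) : Prop :=
  ∃ g : ℕ → G, ∃ s : ℕ → S, g 0 = h ∧ (∀ k ≤ L, g k ∈ N) ∧
    ∀ k < L, (Φ (g (k+1)) (s k)).2 = g k

lemma BPath.mono {Φ : G → S → S × G} {N : Finset G} {L L' : ℕ} {h : G}
    (hb : BPath Φ N L h) (hLL : L' ≤ L) : BPath Φ N L' h := by
  obtain ⟨g, s, h0, hN, htr⟩ := hb
  exact ⟨g, s, h0, fun k hk => hN k (hk.trans hLL), fun k hk => htr k (hk.trans_le hLL)⟩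

/-- arbitrarily long backward paths -/
def AL (Φ : G → S → S × G) (N : Finset G) (h : G) : Prop := ∀ L, BPath Φ N L h

lemma bpath_of_word (Φ : G → S → S × G) (N : Finset G) (d : S) (g : G) (v : List S)
    (m : ℕ) (hm : m ≤ v.length)
    (hN : ∀ j : ℕ, v.length - m ≤ j → j ≤ v.length → ssStateWord Φ g (v.take j) ∈ N) :
    BPath Φ N m (ssStateWord Φ g v) := by
  classical
  set L := v.length with hL
  refine ⟨fun k => ssStateWord Φ g (v.take (L - k)), fun k => v.getD (L - k - 1) d, ?_, ?_, ?_⟩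
  · simp [L]
  · intro k hk
    exact hN (L - k) (by omega) (by omega)
  · intro k hk
    have h1 : L - (k+1) < L := by omega
    have h2 : L - k = (L - (k+1)) + 1 := by omega
    have h3 : v.take (L - k) = v.take (L - (k+1)) ++ [v.get ⟨L - (k+1), h1⟩] := by
      rw [h2]
      simpa using (List.take_concat_get v (L - (k+1)) h1).symm
    have h4 : v.getD (L - (k+1) - 0) d = v.get ⟨L - (k+1), h1⟩ := by
      simp [List.getD, List.getElem?_eq_getElem h1]
    rw [show L - (k+1) - 0 = L - k - 1 by omega] at h4
    show (Φ (ssStateWord Φ g (v.take (L - (k+1)))) (v.getD (L - k - 1) d)).2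
      = ssStateWord Φ g (v.take (L - k))
    rw [h3, ssStateWord_append, h4]
    rfl

/-- every element of the (minimal) nucleus has arbitrarily long backward paths -/
lemma nucleus_AL (Φ : G → S → S × G) (N : Finset G) (d : S)
    (hNcontr : Contracting Φ N)
    (hNmin : ∀ N' : Finset G, Contracting Φ N' → N ⊆ N') :
    ∀ h ∈ N, AL Φ N h := by
  classical
  -- a uniform bound K detecting non-AL elements
  have hK : ∀ M : Finset G, ∃ K : ℕ, ∀ h ∈ M, BPath Φ N K h → AL Φ N h := by
    intro M
    induction M using Finset.induction with
    | empty => exact ⟨0, by simp⟩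
    | @insert a s' hx ih =>
        obtain ⟨K, hK⟩ := ih
        by_cases ha : AL Φ N a
        · refine ⟨K, ?_⟩
          intro h hh hb
          rcases Finset.mem_insert.mp hh with rfl | hh
          · exact ha
          · exact hK h hh hb
        · simp only [AL, not_forall] at ha
          obtain ⟨La, hLa⟩ := ha
          refine ⟨max K La, ?_⟩
          intro h hh hb
          rcases Finset.mem_insert.mp hh with rfl | hh
          · exact absurd (hb.mono (le_max_right _ _)) hLa
          · exact hK h hh (hb.mono (le_max_left _ _))
  obtain ⟨K, hK⟩ := hK N
  -- N' : elements of N with arbitrarily long backward paths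
  classical
  set N' : Finset G := N.filter (fun h => AL Φ N h) with hN'
  have hcontr' : Contracting Φ N' := by
    intro g
    obtain ⟨n₀, hn₀⟩ := hNcontr g
    refine ⟨n₀ + K, ?_⟩
    intro v hv
    have hst : ssStateWord Φ g v ∈ N := hn₀ v (by omega)
    have hbp : BPath Φ N K (ssStateWord Φ g v) := by
      refine bpath_of_word Φ N d g v K (by omega) ?_
      intro j hj hjle
      refine hn₀ (v.take j) ?_
      rw [List.length_take]
      omega
    have : AL Φ N (ssStateWord Φ g v) := hK _ hst hbp
    simp [hN', Finset.mem_filter, hst, this]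
  intro h hh
  have := hNmin N' hcontr' hh
  simp only [hN', Finset.mem_filter] at this
  exact this.2

/-- predecessor with AL -/
lemma AL_pred (Φ : G → S → S × G) (N : Finset G) {h : G}
    (hh : h ∈ N) (hal : AL Φ N h) :
    ∃ p : G, ∃ s : S, p ∈ N ∧ AL Φ N p ∧ (Φ p s).2 = h := by
  classical
  have hstep : ∀ L : ℕ, ∃ p : G, ∃ s : S, p ∈ N ∧ BPath Φ N L p ∧ (Φ p s).2 = h := by
    intro L
    obtain ⟨g, s, h0, hN, htr⟩ := hal (L+1)
    refine ⟨g 1, s 0, hN 1 (by omega), ?_, by rw [htr 0 (by omega), h0]⟩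
    exact ⟨fun k => g (k+1), fun k => s (k+1), rfl, fun k hk => hN (k+1) (by omega),
      fun k hk => htr (k+1) (by omega)⟩
  choose p s hpN hbp htr using hstep
  have : ∃ y : ↥N × S, (Set.preimage (fun L => ((⟨p L, hpN L⟩ : ↥N), s L)) {y}).Infinite := by
    obtain ⟨y, hy⟩ := Finite.exists_infinite_fiber (fun L => ((⟨p L, hpN L⟩ : ↥N), s L))
    exact ⟨y, Set.infinite_coe_iff.mp hy⟩
  obtain ⟨⟨p₀, s₀⟩, hy⟩ := this
  obtain ⟨L₀, hL₀⟩ := hy.nonempty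
  simp only [Set.mem_preimage, Set.mem_singleton_iff, Prod.mk.injEq] at hL₀
  refine ⟨p₀, s₀, p₀.2, ?_, ?_⟩
  · intro L
    obtain ⟨L', hL', hgt⟩ := hy.exists_gt L
    simp only [Set.mem_preimage, Set.mem_singleton_iff, Prod.mk.injEq] at hL'
    have : BPath Φ N L' (p L') := hbp L'
    rw [show (p L' : G) = (p₀ : G) from congrArg Subtype.val hL'.1] at this
    exact this.mono hgt.le
  · rw [← hL₀.2, ← congrArg Subtype.val hL₀.1]
    exact htr L₀

/-- infinite backward path ending at h -/
lemma nucleus_infinite_bpath (Φ : G → S → S × G) (N : Finset G) (d : S)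
    (hNcontr : Contracting Φ N)
    (hNmin : ∀ N' : Finset G, Contracting Φ N' → N ⊆ N')
    {h : G} (hh : h ∈ N) :
    ∃ g : ℕ → G, ∃ s : ℕ → S, g 0 = h ∧ (∀ k, g k ∈ N) ∧
      ∀ k, (Φ (g (k+1)) (s k)).2 = g k := by
  classical
  have hAL := nucleus_AL Φ N d hNcontr hNmin
  -- dependent choice
  have step : ∀ q : {q : G × S // q.1 ∈ N ∧ AL Φ N q.1},
      ∃ q' : {q : G × S // q.1 ∈ N ∧ AL Φ N q.1}, (Φ q'.1.1 q'.1.2).2 = q.1.1 := by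
    rintro ⟨⟨g₀, s₀'⟩, hg₀, hal₀⟩
    obtain ⟨p, s, hpN, hpal, htr⟩ := AL_pred Φ N hg₀ hal₀
    exact ⟨⟨(p, s), hpN, hpal⟩, htr⟩
  choose f hf using step
  have hd : ∃ s0 : S, True := ⟨d, trivial⟩
  let start : {q : G × S // q.1 ∈ N ∧ AL Φ N q.1} := ⟨(h, d), hh, hAL h hh⟩
  let seq : ℕ → {q : G × S // q.1 ∈ N ∧ AL Φ N q.1} := fun k => Nat.recAux start (fun _ q => f q) k
  refine ⟨fun k => (seq k).1.1, fun k => (seq (k+1)).1.2, rfl, fun k => (seq k).2.1, ?_⟩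
  intro k
  exact hf (seq k)


/-- states of a nucleus element are in the nucleus -/
lemma ssState_mem (Φ : G → S → S × G) (N : Finset G)
    (hNclosed : ∀ g ∈ N, ∀ s : S, (Φ g s).2 ∈ N)
    {h : G} (hh : h ∈ N) (η : ℕ → S) : ∀ k, ssState Φ h η k ∈ N := by
  intro k
  induction k with
  | zero => exact hh
  | succ k ih => exact hNclosed _ ih _

/-- KEY: a tail-moving nucleus element yields a post-critical sequence recording the prefix -/
lemma key_pc (Φ : G → S → S × G) (N : Finset G) (d : S)
    (hone : ∀ s : S, Φ 1 s = (s, 1))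
    (hNclosed : ∀ g ∈ N, ∀ s : S, (Φ g s).2 ∈ N)
    (hNcontr : Contracting Φ N)
    (hNmin : ∀ N' : Finset G, Contracting Φ N' → N ⊆ N')
    {h : G} (hh : h ∈ N) (η : ℕ → S) (n : ℕ)
    (hne : tl n (ssAct Φ h η) ≠ tl n η) :
    ∃ s ∈ postCritical Φ N, ∀ k < n, η k = s (n - 1 - k) := by
  have hstm := ssState_mem Φ N hNclosed hh η
  have hn1 : ssState Φ h η n ≠ 1 := by
    intro h1
    exact hne (by rw [tl_ssAct, h1, ssAct_one Φ hone])
  obtain ⟨gE, sE, hE0, hEN, hEtr⟩ := nucleus_infinite_bpath Φ N d hNcontr hNmin hh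
  refine ⟨fun k => if k < n then η (n - 1 - k) else sE (k - n),
    ⟨fun k => if k ≤ n then ssState Φ h η (n - k) else gE (k - n), ?_, ?_, ?_⟩, ?_⟩
  · intro k
    by_cases hk : k ≤ n
    · simpa [hk] using hstm (n - k)
    · simpa [hk] using hEN (k - n)
  · simpa using hn1
  · intro k
    rcases lt_trichotomy k n with hk | rfl | hk
    · have h1 : k + 1 ≤ n := hk
      have h2 : k ≤ n := hk.le
      simp only [if_pos h1, if_pos h2, if_pos hk]
      have : n - (k+1) + 1 = n - k := by omega
      rw [show n - 1 - k = n - (k+1) by omega, ← this, ssState_succ]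
    · simp only [if_neg (by omega : ¬ k + 1 ≤ k), if_neg (lt_irrefl k),
        if_pos (le_refl k), Nat.sub_self]
      rw [show k + 1 - k = 1 by omega]
      rw [hEtr 0, hE0]
      rfl
    · simp only [if_neg (by omega : ¬ k + 1 ≤ n), if_neg (by omega : ¬ k ≤ n),
        if_neg (by omega : ¬ k < n)]
      rw [show k + 1 - n = (k - n) + 1 by omega]
      exact hEtr (k - n)
  · intro k hk
    show η k = if n - 1 - k < n then η (n - 1 - (n - 1 - k)) else sE (n - 1 - k - n)
    rw [if_pos (by omega : n - 1 - k < n), show n - 1 - (n - 1 - k) = k by omega]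


variable (Φ : G → S → S × G) (N : Finset G)

def Dout (n : ℕ) (η : ℕ → S) : Prop := ∃ h ∈ N, tl n (ssAct Φ h η) ≠ tl n η

def Din (n : ℕ) (η : ℕ → S) : Prop := ∃ h ∈ N, tl n (ssAct Φ h⁻¹ η) ≠ tl n η

def Dtot (n : ℕ) (η : ℕ → S) : Prop := Dout Φ N n η ∨ Din Φ N n η

def Dbl : ℕ → (ℕ → S) → Prop
  | 0, _ => True
  | (m+1), η => Dtot Φ N m η

def Fpred (η : ℕ → S) : Prop :=
  ∃ h ∈ N, (∀ n, tl n (ssAct Φ h η) ≠ tl n η) ∨ (∀ n, tl n (ssAct Φ h⁻¹ η) ≠ tl n η)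

lemma tl_eq_up {x y : ℕ → S} {m n : ℕ} (hmn : m ≤ n) (h : tl m x = tl m y) :
    tl n x = tl n y := by
  have : n = m + (n - m) := by omega
  rw [this, ← tl_tl, ← tl_tl, h]

lemma tl_ne_down {x y : ℕ → S} {m n : ℕ} (hmn : m ≤ n) (h : tl n x ≠ tl n y) :
    tl m x ≠ tl m y := fun he => h (tl_eq_up hmn he)

lemma Dtot_down {m n : ℕ} (hmn : m ≤ n) {η : ℕ → S} (h : Dtot Φ N n η) :
    Dtot Φ N m η := by
  rcases h with ⟨h, hN, hne⟩ | ⟨h, hN, hne⟩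
  · exact Or.inl ⟨h, hN, tl_ne_down hmn hne⟩
  · exact Or.inr ⟨h, hN, tl_ne_down hmn hne⟩

lemma Dbl_down {m n : ℕ} (hmn : m ≤ n) {η : ℕ → S} (h : Dbl Φ N n η) :
    Dbl Φ N m η := by
  cases m with
  | zero => trivial
  | succ m =>
      cases n with
      | zero => omega
      | succ n => exact Dtot_down Φ N (by omega) h

lemma eternal_F {η : ℕ → S} (h : ∀ n, Dtot Φ N n η) : Fpred Φ N η := by
  classical
  by_contra hF
  have hch : ∀ h : ↥N, ∃ n₁ n₂ : ℕ, tl n₁ (ssAct Φ (h : G) η) = tl n₁ η ∧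
      tl n₂ (ssAct Φ (h : G)⁻¹ η) = tl n₂ η := by
    rintro ⟨h, hh⟩
    have h1 : ¬ ((∀ n, tl n (ssAct Φ h η) ≠ tl n η) ∨ (∀ n, tl n (ssAct Φ h⁻¹ η) ≠ tl n η)) :=
      fun hx => hF ⟨h, hh, hx⟩
    simp only [not_or, not_forall, not_not] at h1
    obtain ⟨⟨n₁, h₁⟩, ⟨n₂, h₂⟩⟩ := h1
    exact ⟨n₁, n₂, h₁, h₂⟩
  choose n₁ n₂ h₁ h₂ using hch
  set M := Finset.univ.sup (fun h : ↥N => max (n₁ h) (n₂ h)) with hM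
  rcases h M with ⟨g, hg, hne⟩ | ⟨g, hg, hne⟩
  · have hle : n₁ ⟨g, hg⟩ ≤ M := by
      have := Finset.le_sup (f := fun h : ↥N => max (n₁ h) (n₂ h)) (Finset.mem_univ ⟨g, hg⟩)
      simp only [le_sup_iff, sup_le_iff, ← hM] at this ⊢
      omega
    exact hne (tl_eq_up hle (h₁ ⟨g, hg⟩))
  · have hle : n₂ ⟨g, hg⟩ ≤ M := by
      have := Finset.le_sup (f := fun h : ↥N => max (n₁ h) (n₂ h)) (Finset.mem_univ ⟨g, hg⟩)
      simp only [le_sup_iff, sup_le_iff, ← hM] at this ⊢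
      omega
    exact hne (tl_eq_up hle (h₂ ⟨g, hg⟩))


section Tree

variable (S) in
/-- parent node -/
def up (p : ℕ × (ℕ → S)) : ℕ × (ℕ → S) := (p.1 + 1, tl 1 p.2)

variable (S) in
/-- two nodes have a common ancestor -/
def germ (p q : ℕ × (ℕ → S)) : Prop :=
  ∃ a b : ℕ, p.1 + a = q.1 + b ∧ tl a p.2 = tl b q.2

omit [Group G] in
lemma germ_equivalence : Equivalence (germ S) := by
  constructor
  · exact fun p => ⟨0, 0, rfl, rfl⟩
  · rintro p q ⟨a, b, h1, h2⟩
    exact ⟨b, a, h1.symm, h2.symm⟩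
  · rintro p q r ⟨a, b, h1, h2⟩ ⟨c, d, h3, h4⟩
    refine ⟨a + c, d + b, by omega, ?_⟩
    have e1 : tl (a + c) p.2 = tl (b + c) q.2 := by rw [← tl_tl c a, h2, tl_tl c b]
    have e2 : tl (c + b) q.2 = tl (d + b) r.2 := by rw [← tl_tl b c, h4, tl_tl b d]
    rw [e1, show b + c = c + b by omega, e2]

variable (S) in
instance germSetoid : Setoid (ℕ × (ℕ → S)) := ⟨germ S, germ_equivalence⟩

variable (S) in
abbrev TT : Type := Option (ℕ × (ℕ → S))

variable (S) in
noncomputable def isRep (p : ℕ × (ℕ → S)) : Prop :=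
  (Quotient.mk (germSetoid S) p).out = p

variable (S) in
def treeAdj : TT S → TT S → Prop
  | some p, some q => up S p = q ∨ up S q = p
  | some p, none => isRep S p
  | none, some q => isRep S q
  | none, none => False

variable (S) in
noncomputable def tree : SimpleGraph (TT S) where
  Adj := treeAdj S
  symm := by
    constructor
    rintro (_ | p) (_ | q) h
    · exact h.elim
    · exact h
    · exact h
    · exact Or.symm h
  loopless := by
    constructor
    rintro (_ | p) h
    · exact h.elim
    · rcases h with h | h <;>
      · have := congrArg Prod.fst h
        simp [up] at this

omit [Group G] in
lemma adj_some_some {p q : ℕ × (ℕ → S)} (h : (tree S).Adj (some p) (some q)) :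
    up S p = q ∨ up S q = p := h

omit [Group G] in
lemma adj_of_up (p : ℕ × (ℕ → S)) : (tree S).Adj (some p) (some (up S p)) := Or.inl rfl

omit [Group G] in
lemma adj_none_dest {t : TT S} (h : (tree S).Adj none t) :
    ∃ p, t = some p ∧ isRep S p := by
  cases t with
  | none => exact h.elim
  | some q => exact ⟨q, rfl, h⟩

omit [Group G] in
lemma germ_up (p : ℕ × (ℕ → S)) : germ S p (up S p) := by
  refine ⟨1, 0, by simp [up], ?_⟩
  rw [tl_zero]
  rfl

omit [Group G] in
lemma germ_of_adj {p q : ℕ × (ℕ → S)} (h : (tree S).Adj (some p) (some q)) :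
    germ S p q := by
  rcases adj_some_some h with rfl | rfl
  · exact germ_up p
  · exact (germ_equivalence (S := S)).symm (germ_up q)

variable (S) in
def upIter (a : ℕ) (p : ℕ × (ℕ → S)) : ℕ × (ℕ → S) := (p.1 + a, tl a p.2)

omit [Group G] in
lemma upIter_zero (p : ℕ × (ℕ → S)) : upIter S 0 p = p := by
  rcases p with ⟨n, ζ⟩
  simp [upIter, tl_zero]

omit [Group G] in
lemma up_upIter (a : ℕ) (p : ℕ × (ℕ → S)) : up S (upIter S a p) = upIter S (a+1) p := by
  rcases p with ⟨n, ζ⟩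
  simp only [up, upIter, tl_tl, Prod.mk.injEq]
  exact ⟨by omega, trivial⟩

omit [Group G] in
lemma reach_upIter (a : ℕ) (p : ℕ × (ℕ → S)) :
    (tree S).Reachable (some p) (some (upIter S a p)) := by
  induction a with
  | zero => rw [upIter_zero]
  | succ a ih =>
      refine ih.trans ?_
      rw [← up_upIter]
      exact (adj_of_up _).reachable

omit [Group G] in
lemma reach_none (p : ℕ × (ℕ → S)) : (tree S).Reachable (some p) none := by
  classical
  set r := (Quotient.mk (germSetoid S) p).out with hr
  have hgerm : germ S p r := by
    have h1 : (Quotient.mk (germSetoid S) p).out ≈ p := Quotient.mk_out p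
    exact (germ_equivalence (S := S)).symm h1
  obtain ⟨a, b, h1, h2⟩ := hgerm
  have heq : upIter S a p = upIter S b r := by
    simp only [upIter, Prod.mk.injEq]
    exact ⟨h1, h2⟩
  have hrep : (tree S).Adj (some r) none := by
    show isRep S r
    show (Quotient.mk (germSetoid S) r).out = r
    have : Quotient.mk (germSetoid S) r = Quotient.mk (germSetoid S) p := by
      rw [hr, Quotient.out_eq]
    rw [this, ← hr]
  refine ((reach_upIter a p).trans ?_).trans hrep.reachable
  rw [heq]
  exact (reach_upIter b r).symm

omit [Group G] in
lemma tree_connected : (tree S).Connected := by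
  rw [SimpleGraph.connected_iff]
  refine ⟨?_, ⟨none⟩⟩
  intro t t'
  have h : ∀ t : TT S, (tree S).Reachable t none := by
    intro t
    cases t with
    | none => exact SimpleGraph.Reachable.refl none
    | some p => exact reach_none p
  exact (h t).trans (h t').symm

/-- generic decomposition of a cycle -/
lemma cycDecomp {V : Type} {Γ : SimpleGraph V} {u : V} {c : Γ.Walk u u} (hc : c.IsCycle) :
    ∃ x y, Γ.Adj u x ∧ Γ.Adj u y ∧ x ≠ y ∧ x ∈ c.support ∧ y ∈ c.support ∧
      ∃ q : Γ.Walk y x, u ∉ q.support := by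
  cases c with
  | nil => exact absurd hc.three_le_length (by simp)
  | @cons _ x _ h₁ p =>
    cases hp : p.reverse with
    | nil => exact (Γ.loopless.irrefl u h₁).elim
    | @cons _ y _ h₂ q =>
        have hpsupp : p.support.reverse = u :: q.support := by
          rw [← SimpleGraph.Walk.support_reverse, hp, SimpleGraph.Walk.support_cons]
        have hnd : p.support.Nodup := by
          have h3 := hc.2
          rw [SimpleGraph.Walk.support_cons] at h3
          exact h3
        have hnd2 : (u :: q.support).Nodup := by
          rw [← hpsupp]
          exact List.nodup_reverse.mpr hnd
        have huq : u ∉ q.support := (List.nodup_cons.mp hnd2).1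
        have hedge : s(u, y) ∈ p.edges := by
          have : s(u, y) ∈ p.reverse.edges := by
            rw [hp, SimpleGraph.Walk.edges_cons]
            exact List.mem_cons_self
          rw [SimpleGraph.Walk.edges_reverse, List.mem_reverse] at this
          exact this
        have htrail : (SimpleGraph.Walk.cons h₁ p).IsTrail := hc.isCircuit.isTrail
        have hnotedge : s(u, x) ∉ p.edges := by
          have := htrail.edges_nodup
          rw [SimpleGraph.Walk.edges_cons] at this
          exact (List.nodup_cons.mp this).1
        have hxy : x ≠ y := by
          rintro rfl
          exact hnotedge hedge
        refine ⟨x, y, h₁, h₂, hxy, ?_, ?_, q, huq⟩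
        · rw [SimpleGraph.Walk.support_cons]
          exact List.mem_cons_of_mem _ p.start_mem_support
        · rw [SimpleGraph.Walk.support_cons]
          refine List.mem_cons_of_mem _ ?_
          rw [← List.mem_reverse, hpsupp]
          exact List.mem_cons_of_mem _ q.start_mem_support

omit [Group G] in
lemma walk_germ : ∀ {t t' : TT S} (q : (tree S).Walk t t'), (none ∉ q.support) →
    ∀ {p p' : ℕ × (ℕ → S)}, t = some p → t' = some p' → germ S p p' := by
  intro t t' q
  induction q with
  | nil =>
      rintro _ p p' rfl h
      rw [Option.some_inj] at h
      rw [h]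
      exact (germ_equivalence (S := S)).refl p'
  | @cons a b c h q ih =>
      intro hns p p' ha hc'
      subst ha
      cases b with
      | none =>
          exfalso
          apply hns
          rw [SimpleGraph.Walk.support_cons]
          exact List.mem_cons_of_mem _ q.start_mem_support
      | some m =>
          have h1 : germ S p m := germ_of_adj h
          have h2 : germ S m p' := by
            refine ih ?_ rfl hc'
            intro hmem
            apply hns
            rw [SimpleGraph.Walk.support_cons]
            exact List.mem_cons_of_mem _ hmem
          exact (germ_equivalence (S := S)).trans h1 h2

variable (S) in
def lev : TT S → ℕ
  | none => 0
  | some p => p.1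

omit [Group G] in
lemma tree_acyclic : (tree S).IsAcyclic := by
  classical
  intro v c hc
  by_cases hn : (none : TT S) ∈ c.support
  · have hc₁ : (c.rotate _ hn).IsCycle := hc.rotate hn
    obtain ⟨x, y, hax, hay, hxy, hxs, hys, q, huq⟩ := cycDecomp hc₁
    obtain ⟨r₁, rfl, hrep₁⟩ := adj_none_dest hax
    obtain ⟨r₂, rfl, hrep₂⟩ := adj_none_dest hay
    have hg : germ S r₂ r₁ := walk_germ q huq rfl rfl
    apply hxy
    have : Quotient.mk (germSetoid S) r₂ = Quotient.mk (germSetoid S) r₁ := Quotient.sound hg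
    have h2 : r₁ = r₂ := by
      rw [← hrep₁, ← hrep₂, this]
    rw [h2]
  · -- all vertices are `some`; take a minimal-level vertex
    obtain ⟨u', hu's, hmin⟩ := (c.support.toFinset).exists_min_image (lev S)
      ⟨v, by simp [c.start_mem_support]⟩
    rw [List.mem_toFinset] at hu's
    have hc₂ : (c.rotate _ hu's).IsCycle := hc.rotate hu's
    obtain ⟨x, y, hax, hay, hxy, hxs, hys, q, hq⟩ := cycDecomp hc₂
    -- membership transfer
    have hmemtrans : ∀ t : TT S, t ∈ (c.rotate _ hu's).support → t ∈ c.support := by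
      intro t ht
      rcases SimpleGraph.Walk.support_eq_cons (c.rotate _ hu's) ▸ ht with ht'
      rw [List.mem_cons] at ht'
      rcases ht' with rfl | ht'
      · exact hu's
      · have hrot := SimpleGraph.Walk.support_rotate c _ hu's
        have : t ∈ c.support.tail := hrot.mem_iff.mp ht'
        have h5 := SimpleGraph.Walk.support_eq_cons c
        rw [h5]
        exact List.mem_cons_of_mem _ this
    obtain ⟨p₀, rfl⟩ : ∃ p₀, u' = some p₀ := by
      cases u' with
      | none => exact absurd hu's hn
      | some p₀ => exact ⟨p₀, rfl⟩
    have hlev : ∀ t : TT S, t ∈ c.support → p₀.1 ≤ lev S t := by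
      intro t ht
      exact hmin t (List.mem_toFinset.mpr ht)
    have hup : ∀ t : TT S, (tree S).Adj (some p₀) t → t ∈ c.support → t = some (up S p₀) := by
      intro t hadj ht
      cases t with
      | none => exact absurd ht hn
      | some pt =>
          rcases adj_some_some hadj with rfl | heq
          · rfl
          · exfalso
            have := hlev (some pt) ht
            have h6 : pt.1 + 1 = p₀.1 := congrArg Prod.fst heq
            simp only [lev] at this
            omega
    have hx := hup x hax (hmemtrans x hxs)
    have hy := hup y hay (hmemtrans y hys)
    exact hxy (hx.trans hy.symm)

omit [Group G] in
lemma tree_isTree : (tree S).IsTree := ⟨tree_connected, tree_acyclic⟩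

end Tree


/-- connectivity of an induced chain -/
lemma chainConn {V : Type} (Γ : SimpleGraph V) (c : ℕ → V) (M : ℕ)
    (hadj : ∀ k : ℕ, Γ.Adj (c k) (c (k+1))) :
    (Γ.induce (c '' Set.Iic M)).Connected := by
  have hmem : ∀ i, i ≤ M → c i ∈ c '' Set.Iic M := fun i hi => ⟨i, hi, rfl⟩
  rw [SimpleGraph.connected_iff]
  refine ⟨?_, ⟨⟨c 0, hmem 0 (Nat.zero_le M)⟩⟩⟩
  have key : ∀ i (hi : i ≤ M),
      (Γ.induce (c '' Set.Iic M)).Reachable ⟨c 0, hmem 0 (Nat.zero_le M)⟩ ⟨c i, hmem i hi⟩ := by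
    intro i
    induction i with
    | zero => intro _; exact SimpleGraph.Reachable.refl _
    | succ i ih =>
        intro hi
        refine (ih (by omega)).trans ?_
        have hstep : (Γ.induce (c '' Set.Iic M)).Adj ⟨c i, hmem i (by omega)⟩
            ⟨c (i+1), hmem (i+1) hi⟩ := hadj i
        exact hstep.reachable
  rintro ⟨a, ha⟩ ⟨b, hb⟩
  obtain ⟨i, hi, rfl⟩ := ha
  obtain ⟨j, hj, rfl⟩ := hb
  exact (key i hi).symm.trans (key j hj)

section Encode
variable (Φ : G → S → S × G) (N : Finset G) (hpcf : (postCritical Φ N).Finite)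

/-- decoder for prefixes -/
noncomputable def decodeP (dflt : S) (n : ℕ)
    (dat : Bool × ↥N × ↥hpcf.toFinset) : ℕ → S :=
  fun k =>
    if dat.1 then (dat.2.2 : ℕ → S) (n - 1 - k)
    else ssAct Φ (dat.2.1 : G) (fun j => if j < n then (dat.2.2 : ℕ → S) (n - 1 - j) else dflt) k

variable (hone : ∀ s : S, Φ 1 s = (s, 1))
  (hcoc : ∀ (g h : G) (s : S),
      Φ (g * h) s = ((Φ g (Φ h s).1).1, (Φ g (Φ h s).1).2 * (Φ h s).2))
  (hNclosed : ∀ g ∈ N, ∀ s : S, (Φ g s).2 ∈ N)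
  (hNcontr : Contracting Φ N)
  (hNmin : ∀ N' : Finset G, Contracting Φ N' → N ⊆ N')

include hpcf hone hcoc hNclosed hNcontr hNmin in
lemma encode_prefix (dflt : S) (η : ℕ → S) (n : ℕ) (hD : Dtot Φ N n η) :
    ∃ dat : Bool × ↥N × ↥hpcf.toFinset, ∀ k < n, η k = decodeP Φ N hpcf dflt n dat k := by
  classical
  rcases hD with ⟨h, hN, hne⟩ | ⟨h, hN, hne⟩
  · obtain ⟨s, hsP, hpre⟩ := key_pc Φ N dflt hone hNclosed hNcontr hNmin hN η n hne
    refine ⟨(true, ⟨h, hN⟩, ⟨s, hpcf.mem_toFinset.mpr hsP⟩), ?_⟩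
    intro k hk
    simpa [decodeP] using hpre k hk
  · set w := ssAct Φ h⁻¹ η with hw
    have hwu : ssAct Φ h w = η := ssAct_inv_cancel Φ hone hcoc h η
    have hne' : tl n (ssAct Φ h w) ≠ tl n w := by
      rw [hwu]
      exact fun he => hne (by rw [hw] at he ⊢; exact he.symm)
    obtain ⟨s, hsP, hpre⟩ := key_pc Φ N dflt hone hNclosed hNcontr hNmin hN w n hne'
    refine ⟨(false, ⟨h, hN⟩, ⟨s, hpcf.mem_toFinset.mpr hsP⟩), ?_⟩
    intro k hk
    have hcongr := ssAct_congr Φ h (ξ := fun j => if j < n then s (n - 1 - j) else dflt)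
      (ξ' := w) n (fun j hj => by simp only [if_pos hj]; exact (hpre j hj).symm) k hk
    simp only [decodeP, Bool.false_eq_true, if_false]
    rw [show η k = ssAct Φ h w k from (congrFun hwu k).symm]
    exact hcongr.symm

include hpcf hone hcoc hNclosed hNcontr hNmin in
lemma Fraw_finite (dflt : S) : {η : ℕ → S | Fpred Φ N η}.Finite := by
  classical
  by_contra hfin
  have hinf : {η : ℕ → S | Fpred Φ N η}.Infinite := hfin
  set C := Fintype.card (Bool × ↥N × ↥hpcf.toFinset) with hC
  obtain ⟨Tset, hTsub, hTfin, hTcard⟩ := hinf.exists_subset_ncard_eq (C + 1)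
  set Tfin := hTfin.toFinset with hTfin'
  have hTfincard : Tfin.card = C + 1 := by
    rw [hTfin', ← Set.ncard_eq_toFinset_card Tset hTfin, hTcard]
  -- every element of Fpred satisfies Dtot at every level
  have hFD : ∀ η, Fpred Φ N η → ∀ n, Dtot Φ N n η := by
    rintro η ⟨h, hN, hcase | hcase⟩ n
    · exact Or.inl ⟨h, hN, hcase n⟩
    · exact Or.inr ⟨h, hN, hcase n⟩
  have hclaim : ∀ η ∈ {η : ℕ → S | Fpred Φ N η}, ∀ n, ∃ dat : Bool × ↥N × ↥hpcf.toFinset,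
      ∀ k < n, η k = decodeP Φ N hpcf dflt n dat k := by
    intro η hη n
    exact encode_prefix Φ N hpcf hone hcoc hNclosed hNcontr hNmin dflt η n (hFD η hη n)
  -- separating level
  have hdp : ∀ a b : ℕ → S, a ≠ b → ∃ k, a k ≠ b k := by
    intro a b hab
    by_contra hc
    push_neg at hc
    exact hab (funext hc)
  set dp : (ℕ → S) → (ℕ → S) → ℕ := fun a b =>
    if hab : a = b then 0 else Nat.find (hdp a b hab) with hdp'
  set n := 1 + Tfin.sup (fun a => Tfin.sup (fun b => dp a b)) with hn
  have hdplt : ∀ a ∈ Tfin, ∀ b ∈ Tfin, dp a b < n := by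
    intro a ha b hb
    have h1 : dp a b ≤ Tfin.sup (fun b => dp a b) := Finset.le_sup hb
    have h2 : Tfin.sup (fun b => dp a b) ≤ Tfin.sup (fun a => Tfin.sup (fun b => dp a b)) :=
      Finset.le_sup (f := fun a => Tfin.sup (fun b => dp a b)) ha
    omega
  -- nonempty codomain
  have hT0 : ∃ η₀, η₀ ∈ Tfin := by
    have : 0 < Tfin.card := by omega
    obtain ⟨η₀, hη₀⟩ := Finset.card_pos.mp this
    exact ⟨η₀, hη₀⟩
  obtain ⟨η₀, hη₀⟩ := hT0
  have hη₀F : Fpred Φ N η₀ := hTsub ((Set.Finite.mem_toFinset hTfin).mp hη₀)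
  obtain ⟨d₀, _⟩ := hclaim η₀ hη₀F n
  -- the map
  have hmap : ∀ η : ℕ → S, ∃ dat : Bool × ↥N × ↥hpcf.toFinset,
      Fpred Φ N η → ∀ k < n, η k = decodeP Φ N hpcf dflt n dat k := by
    intro η
    by_cases hη : Fpred Φ N η
    · obtain ⟨dat, hdat⟩ := hclaim η hη n
      exact ⟨dat, fun _ => hdat⟩
    · exact ⟨d₀, fun h => absurd h hη⟩
  choose f hf using hmap
  have hpig : ∃ a ∈ Tfin, ∃ b ∈ Tfin, a ≠ b ∧ f a = f b := by
    apply Finset.exists_ne_map_eq_of_card_lt_of_maps_to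
    · rw [Finset.card_univ, hTfincard, hC]
      omega
    · intro a _
      exact Finset.mem_univ (f a)
  obtain ⟨a, ha, b, hb, hab, hfab⟩ := hpig
  have haF : Fpred Φ N a := hTsub ((Set.Finite.mem_toFinset hTfin).mp ha)
  have hbF : Fpred Φ N b := hTsub ((Set.Finite.mem_toFinset hTfin).mp hb)
  have hk := hdplt a ha b hb
  have hne : a (dp a b) ≠ b (dp a b) := by
    rw [hdp']
    simp only [dif_neg hab]
    exact Nat.find_spec (hdp a b hab)
  apply hne
  rw [hf a haF _ hk, hf b hbF _ hk, hfab]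

end Encode


/-- the bags of the tree decomposition -/
def bag (Φ : G → S → S × G) (N : Finset G) (ξ : ℕ → S) :
    TT S → Set {η : ℕ → S // η ∈ orbitSet Φ ξ}
  | none => {u | Fpred Φ N u.1}
  | some p => {u | Fpred Φ N u.1} ∪ {u | tl p.1 u.1 = p.2 ∧ Dbl Φ N p.1 u.1}

end PCF

open SSG in
/-- **Schreier graphs of post-critically finite self-similar groups have finite
treewidth** (Proposition 3.3): for `G` a finitely generated bounded (post-critically
finite) self-similar group with nucleus `N` and `ξ ∈ S^ℕ`, the Schreier graph of the
orbit `G·ξ` admits a tree decomposition whose bags are finite of uniformly bounded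
size. -/
theorem pcf_schreier_graph_finite_treewidth
    {G : Type} [Group G] {S : Type} [Fintype S]
    (Φ : G → S → S × G)
    (hone : ∀ s : S, Φ 1 s = (s, 1))
    (hcoc : ∀ (g h : G) (s : S),
      Φ (g * h) s = ((Φ g (Φ h s).1).1, (Φ g (Φ h s).1).2 * (Φ h s).2))
    (hfaithful : ∀ g : G, (∀ ξ : ℕ → S, ssAct Φ g ξ = ξ) → g = 1)
    (hfg : Group.FG G)
    (N : Finset G)
    (hNone : (1 : G) ∈ N)
    (hNclosed : ∀ g ∈ N, ∀ s : S, (Φ g s).2 ∈ N)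
    (hNcontr : Contracting Φ N)
    (hNmin : ∀ N' : Finset G, Contracting Φ N' → N ⊆ N')
    (hpcf : (postCritical Φ N).Finite)
    (ξ : ℕ → S) :
    ∃ (T : Type) (Δ : SimpleGraph T), Δ.IsTree ∧
      ∃ X : T → Set {η : ℕ → S // η ∈ orbitSet Φ ξ},
        (∀ u : {η : ℕ → S // η ∈ orbitSet Φ ξ},
          (Δ.induce {t : T | u ∈ X t}).Connected) ∧
        (∀ u v : {η : ℕ → S // η ∈ orbitSet Φ ξ},
          (schreierGraph Φ N ξ).Adj u v → ∃ t : T, u ∈ X t ∧ v ∈ X t) ∧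
        ∃ w : ℕ, ∀ t : T, (X t).Finite ∧ (X t).ncard ≤ w := by
  classical
  -- S is nonempty
  have hS : Nonempty S := by
    by_contra hS
    have hempty : Contracting Φ (∅ : Finset G) := by
      intro g
      refine ⟨1, fun v hv => ?_⟩
      exfalso
      rcases v with _ | ⟨s, v⟩
      · simp at hv
      · exact hS ⟨s⟩
    exact absurd (hNmin ∅ hempty hNone) (by simp)
  obtain ⟨dflt⟩ := hS
  refine ⟨PCF.TT S, PCF.tree S, PCF.tree_isTree, PCF.bag Φ N ξ, ?_, ?_, ?_⟩
  · -- condition 1 : connectivity of the bags containing a fixed vertex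
    intro u
    by_cases hF : PCF.Fpred Φ N u.1
    · have huniv : {t | u ∈ PCF.bag Φ N ξ t} = Set.univ := by
        ext t
        simp only [Set.mem_univ, iff_true, Set.mem_setOf_eq]
        cases t with
        | none => exact hF
        | some p => exact Or.inl hF
      rw [huniv]
      exact (SimpleGraph.induceUnivIso (PCF.tree S)).connected_iff.mpr PCF.tree_connected
    · have hDex : ∃ n, ¬ PCF.Dtot Φ N n u.1 := by
        by_contra hall
        push_neg at hall
        exact hF (PCF.eternal_F Φ N hall)
      set M := Nat.find hDex with hM
      have hMspec : ¬ PCF.Dtot Φ N M u.1 := Nat.find_spec hDex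
      have hDbl_iff : ∀ n, PCF.Dbl Φ N n u.1 ↔ n ≤ M := by
        intro n
        constructor
        · intro hD
          by_contra hn
          push_neg at hn
          exact hMspec (PCF.Dbl_down Φ N (by omega : M + 1 ≤ n) hD)
        · intro hn
          cases n with
          | zero => trivial
          | succ m => exact not_not.mp (Nat.find_min hDex (by omega : m < M))
      have hset : {t | u ∈ PCF.bag Φ N ξ t} =
          (fun n => (some (n, PCF.tl n u.1) : PCF.TT S)) '' Set.Iic M := by
        ext t
        cases t with
        | none =>
            simp only [Set.mem_setOf_eq, Set.mem_image, Set.mem_Iic]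
            constructor
            · intro h
              exact absurd h hF
            · rintro ⟨i, _, h⟩
              exact absurd h (by simp)
        | some p =>
            rcases p with ⟨n, ζ⟩
            simp only [Set.mem_setOf_eq, Set.mem_image, Set.mem_Iic]
            constructor
            · rintro (h | ⟨h1, h2⟩)
              · exact absurd h hF
              · exact ⟨n, (hDbl_iff n).mp h2, by rw [h1]⟩
            · rintro ⟨i, hi, h⟩
              rw [Option.some_inj] at h
              have h1 : i = n := congrArg Prod.fst h
              subst h1
              have h2 : PCF.tl i u.1 = ζ := congrArg Prod.snd h
              exact Or.inr ⟨h2, (hDbl_iff i).mpr hi⟩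
      rw [hset]
      refine PCF.chainConn (PCF.tree S) _ M (fun k => ?_)
      refine Or.inl ?_
      show PCF.up S (k, PCF.tl k u.1) = (k+1, PCF.tl (k+1) u.1)
      rw [Prod.ext_iff]
      exact ⟨rfl, PCF.tl_tl 1 k u.1⟩
  · -- condition 2 : every edge is inside some bag
    have cover : ∀ u v : {η : ℕ → S // η ∈ orbitSet Φ ξ}, u.1 ≠ v.1 →
        (∃ h ∈ N, ssAct Φ h u.1 = v.1) →
        ∃ t, u ∈ PCF.bag Φ N ξ t ∧ v ∈ PCF.bag Φ N ξ t := by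
      rintro u v hne ⟨h, hN, hact⟩
      have hinv : ssAct Φ h⁻¹ v.1 = u.1 := by
        rw [← hact]
        exact PCF.ssAct_cancel_inv Φ hone hcoc h u.1
      by_cases hEx : ∃ n, PCF.tl n u.1 = PCF.tl n v.1
      · set m := Nat.find hEx with hm'
        have hm : PCF.tl m u.1 = PCF.tl m v.1 := Nat.find_spec hEx
        have hm0 : m ≠ 0 := by
          intro h0
          rw [h0, PCF.tl_zero, PCF.tl_zero] at hm
          exact hne hm
        obtain ⟨m', hmm⟩ := Nat.exists_eq_succ_of_ne_zero hm0
        have hminlt : ¬ PCF.tl m' u.1 = PCF.tl m' v.1 := Nat.find_min hEx (by omega)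
        rw [hmm] at hm
        refine ⟨some (m' + 1, PCF.tl (m'+1) u.1), Or.inr ⟨rfl, ?_⟩, Or.inr ⟨hm.symm, ?_⟩⟩
        · exact Or.inl ⟨h, hN, by rw [hact]; exact fun he => hminlt he.symm⟩
        · exact Or.inr ⟨h, hN, by rw [hinv]; exact hminlt⟩
      · push_neg at hEx
        refine ⟨none, ⟨h, hN, Or.inl fun n => ?_⟩, ⟨h, hN, Or.inr fun n => ?_⟩⟩
        · rw [hact]
          exact fun he => hEx n he.symm
        · rw [hinv]
          exact hEx n
    intro u v hadj
    rw [schreierGraph, SimpleGraph.fromRel_adj] at hadj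
    obtain ⟨hne, hrel | hrel⟩ := hadj
    · exact cover u v (fun h => hne (Subtype.ext h)) hrel
    · obtain ⟨t, h1, h2⟩ := cover v u (fun h => hne (Subtype.ext h.symm)) hrel
      exact ⟨t, h2, h1⟩
  · -- condition 3 : bags are finite of uniformly bounded size
    have hFrawfin : {η : ℕ → S | PCF.Fpred Φ N η}.Finite :=
      PCF.Fraw_finite Φ N hpcf hone hcoc hNclosed hNcontr hNmin dflt
    have hFsfin : {u : {η : ℕ → S // η ∈ orbitSet Φ ξ} | PCF.Fpred Φ N u.1}.Finite := by
      have := hFrawfin.preimage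
        (Set.injOn_of_injective (Subtype.val_injective
          (p := fun η => η ∈ orbitSet Φ ξ)))
      exact this
    set CB := Fintype.card ((Bool × ↥N × ↥hpcf.toFinset) × S) with hCB
    set CF := {u : {η : ℕ → S // η ∈ orbitSet Φ ξ} | PCF.Fpred Φ N u.1}.ncard with hCF
    refine ⟨CF + (CB + 1), fun t => ?_⟩
    -- raw bound
    have hraw : ∀ n : ℕ, ∀ ζ : ℕ → S,
        {η : ℕ → S | PCF.tl n η = ζ ∧ PCF.Dbl Φ N n η}.Finite ∧
        {η : ℕ → S | PCF.tl n η = ζ ∧ PCF.Dbl Φ N n η}.ncard ≤ CB + 1 := by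
      intro n ζ
      cases n with
      | zero =>
          have hsub : {η : ℕ → S | PCF.tl 0 η = ζ ∧ PCF.Dbl Φ N 0 η} ⊆ {ζ} := by
            intro η hη
            have := hη.1
            rw [PCF.tl_zero] at this
            exact this
          refine ⟨(Set.finite_singleton ζ).subset hsub, ?_⟩
          calc {η : ℕ → S | PCF.tl 0 η = ζ ∧ PCF.Dbl Φ N 0 η}.ncard
              ≤ ({ζ} : Set (ℕ → S)).ncard := Set.ncard_le_ncard hsub (Set.finite_singleton ζ)
            _ = 1 := Set.ncard_singleton ζ
            _ ≤ CB + 1 := by omega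
      | succ m =>
          set dec : (Bool × ↥N × ↥hpcf.toFinset) × S → (ℕ → S) := fun dat k =>
            if k < m then PCF.decodeP Φ N hpcf dflt m dat.1 k
            else if k = m then dat.2 else ζ (k - (m+1)) with hdec
          have hsub : {η : ℕ → S | PCF.tl (m+1) η = ζ ∧ PCF.Dbl Φ N (m+1) η} ⊆
              Set.range dec := by
            rintro η ⟨hζ, hD⟩
            obtain ⟨dat, hdat⟩ :=
              PCF.encode_prefix Φ N hpcf hone hcoc hNclosed hNcontr hNmin dflt η m hD
            refine ⟨(dat, η m), ?_⟩
            funext k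
            rw [hdec]
            by_cases hk : k < m
            · simp only [if_pos hk]
              exact (hdat k hk).symm
            · by_cases hk' : k = m
              · simp only [if_neg hk, if_pos hk']
                rw [hk']
              · simp only [if_neg hk, if_neg hk']
                have h1 : (m+1) + (k - (m+1)) = k := by omega
                have h2 := congrFun hζ (k - (m+1))
                show ζ (k - (m+1)) = η k
                rw [← h2]
                show PCF.tl (m+1) η (k - (m+1)) = η k
                show η ((m+1) + (k - (m+1))) = η k
                rw [h1]
          have hrangefin : (Set.range dec).Finite := Set.finite_range dec
          refine ⟨hrangefin.subset hsub, ?_⟩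
          calc {η : ℕ → S | PCF.tl (m+1) η = ζ ∧ PCF.Dbl Φ N (m+1) η}.ncard
              ≤ (Set.range dec).ncard := Set.ncard_le_ncard hsub hrangefin
            _ = (dec '' Set.univ).ncard := by rw [Set.image_univ]
            _ ≤ (Set.univ : Set ((Bool × ↥N × ↥hpcf.toFinset) × S)).ncard :=
                Set.ncard_image_le Set.finite_univ
            _ = CB := by rw [Set.ncard_univ, Nat.card_eq_fintype_card]
            _ ≤ CB + 1 := by omega
    cases t with
    | none =>
        refine ⟨hFsfin, ?_⟩
        show {u : {η : ℕ → S // η ∈ orbitSet Φ ξ} | PCF.Fpred Φ N u.1}.ncard ≤ CF + (CB + 1)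
        omega
    | some p =>
        rcases p with ⟨n, ζ⟩
        obtain ⟨hfinraw, hcardraw⟩ := hraw n ζ
        have hRfin : {u : {η : ℕ → S // η ∈ orbitSet Φ ξ} |
            PCF.tl n u.1 = ζ ∧ PCF.Dbl Φ N n u.1}.Finite := by
          have := hfinraw.preimage
            (Set.injOn_of_injective (Subtype.val_injective
              (p := fun η => η ∈ orbitSet Φ ξ)))
          exact this
        have hRcard : {u : {η : ℕ → S // η ∈ orbitSet Φ ξ} |
            PCF.tl n u.1 = ζ ∧ PCF.Dbl Φ N n u.1}.ncard ≤ CB + 1 := by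
          set R := {u : {η : ℕ → S // η ∈ orbitSet Φ ξ} |
            PCF.tl n u.1 = ζ ∧ PCF.Dbl Φ N n u.1} with hR
          have h1 : (Subtype.val '' R).ncard = R.ncard :=
            Set.ncard_image_of_injective R (Subtype.val_injective)
          have h2 : Subtype.val '' R ⊆ {η : ℕ → S | PCF.tl n η = ζ ∧ PCF.Dbl Φ N n η} := by
            rintro η ⟨u, hu, rfl⟩
            exact hu
          calc R.ncard = (Subtype.val '' R).ncard := h1.symm
            _ ≤ {η : ℕ → S | PCF.tl n η = ζ ∧ PCF.Dbl Φ N n η}.ncard :=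
                Set.ncard_le_ncard h2 hfinraw
            _ ≤ CB + 1 := hcardraw
        constructor
        · exact hFsfin.union hRfin
        · calc (PCF.bag Φ N ξ (some (n, ζ))).ncard
              ≤ {u : {η : ℕ → S // η ∈ orbitSet Φ ξ} | PCF.Fpred Φ N u.1}.ncard +
                {u : {η : ℕ → S // η ∈ orbitSet Φ ξ} |
                  PCF.tl n u.1 = ζ ∧ PCF.Dbl Φ N n u.1}.ncard := Set.ncard_union_le _ _
            _ ≤ CF + (CB + 1) := by omega
end

section
/- Let bin : ℤ → {0,1}^ℕ be the two's-complement binary digit map, bin(n)_i = ⌊n / 2^i⌋ mod 2 (so bin(n) is eventually 0 for n ≥ 0 and eventually 1 for n < 0). Define transformations t, u of the set of eventually constant sequences in {0,1}^ℕ by: t(1^k 0 ξ) = 0^k 1 ξ for k ≥ 0, t(1^∞) = 0^∞; and u(0^k 1 ξ) = 0^k 1 t(ξ) for k ≥ 0, u(0^∞) = 0^∞. Then for all n ∈ ℤ: t(bin(n)) = bin(n+1); u(bin(0)) = bin(0); and u(bin(n)) = bin(n + 2^{v₂(n)+1}) for n ≠ 0, where v₂(n) is the 2-adic valuation of n. Consequently,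 the Schreier graph of the action of t and u on the image of bin is isomorphic to the long range graph. -/
open scoped Classical

/-- Two's-complement binary digits of an integer: `bin n i = ⌊n / 2^i⌋ mod 2`.
For `n ≥ 0` this is eventually `false`, for `n < 0` eventually `true`. -/
def bin (n : ℤ) (i : ℕ) : Bool :=
  decide (Int.fdiv n (2 ^ i) % 2 = 1)

/-- The odometer transformation `t`: it maps `1^k 0 ξ` to `0^k 1 ξ` and `1^∞` to `0^∞`
(the digit at position `n` is flipped exactly when all earlier digits equal `1`). -/
def tMap (ξ : ℕ → Bool) : ℕ → Bool := fun n =>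
  if ∀ i < n, ξ i = true then !(ξ n) else ξ n

/-- The transformation `u`: it maps `0^k 1 ξ` to `0^k 1 (t ξ)` and `0^∞` to `0^∞`. -/
noncomputable def uMap (ξ : ℕ → Bool) : ℕ → Bool := fun n =>
  if h : ∃ i, ξ i = true then
    if n ≤ Nat.find h then ξ n
    else tMap (fun j => ξ (j + (Nat.find h + 1))) (n - (Nat.find h + 1))
  else ξ n

private lemma pow2pos (i : ℕ) : (0:ℤ) < 2 ^ i := by positivity

private lemma bin_eq (n : ℤ) (i : ℕ) : bin n i = decide (n / 2 ^ i % 2 = 1) := by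
  unfold bin
  rw [Int.fdiv_eq_ediv_of_nonneg _ (le_of_lt (pow2pos i))]

private lemma emod_succ (n : ℤ) (i : ℕ) :
    n % 2 ^ (i + 1) = n % 2 ^ i + 2 ^ i * (n / 2 ^ i % 2) := by
  have hP : (0:ℤ) < 2 ^ i := pow2pos i
  have h1 : 2 ^ i * (n / 2 ^ i) + n % 2 ^ i = n := Int.mul_ediv_add_emod n (2 ^ i)
  have h2 : 2 * (n / 2 ^ i / 2) + n / 2 ^ i % 2 = n / 2 ^ i := Int.mul_ediv_add_emod _ 2
  have hr0 : 0 ≤ n % 2 ^ i := Int.emod_nonneg n (ne_of_gt hP)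
  have hr1 : n % 2 ^ i < 2 ^ i := Int.emod_lt_of_pos n hP
  have hd : n / 2 ^ i % 2 = 0 ∨ n / 2 ^ i % 2 = 1 := Int.emod_two_eq _
  have key : n = (n % 2 ^ i + 2 ^ i * (n / 2 ^ i % 2)) + 2 ^ (i + 1) * (n / 2 ^ i / 2) := by
    rw [pow_succ]
    linear_combination -h1 - (2:ℤ) ^ i * h2
  conv_lhs => rw [key]
  rw [Int.add_mul_emod_self_left]
  refine Int.emod_eq_of_lt ?_ ?_
  · rcases hd with h | h <;> rw [h] <;> nlinarith
  · rcases hd with h | h <;> rw [h] <;> rw [pow_succ] <;> nlinarith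

private lemma allones (n : ℤ) (i : ℕ) :
    (∀ j < i, bin n j = true) ↔ n % 2 ^ i = 2 ^ i - 1 := by
  induction i with
  | zero => simp
  | succ i ih =>
    have hP : (0:ℤ) < 2 ^ i := pow2pos i
    have hr0 : 0 ≤ n % 2 ^ i := Int.emod_nonneg n (ne_of_gt hP)
    have hr1 : n % 2 ^ i < 2 ^ i := Int.emod_lt_of_pos n hP
    have hd : n / 2 ^ i % 2 = 0 ∨ n / 2 ^ i % 2 = 1 := Int.emod_two_eq _
    have hbin : bin n i = true ↔ n / 2 ^ i % 2 = 1 := by rw [bin_eq]; simp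
    have hsplit : (∀ j < i + 1, bin n j = true) ↔ (∀ j < i, bin n j = true) ∧ bin n i = true := by
      constructor
      · intro h; exact ⟨fun j hj => h j (by omega), h i (by omega)⟩
      · rintro ⟨h1, h2⟩ j hj
        rcases Nat.lt_succ_iff_lt_or_eq.mp hj with h | h
        · exact h1 j h
        · rw [h]; exact h2
    rw [hsplit, ih, hbin, emod_succ, pow_succ]
    constructor
    · rintro ⟨ha, hb⟩; rw [ha, hb]; ring
    · intro h
      rcases hd with hd' | hd'
      · rw [hd'] at h; exfalso; nlinarith
      · rw [hd'] at h
        exact ⟨by linarith, hd'⟩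

private lemma t_bin (n : ℤ) : tMap (bin n) = bin (n + 1) := by
  funext i
  have hP : (0:ℤ) < 2 ^ i := pow2pos i
  have h1 : 2 ^ i * (n / 2 ^ i) + n % 2 ^ i = n := Int.mul_ediv_add_emod n (2 ^ i)
  have hr0 : 0 ≤ n % 2 ^ i := Int.emod_nonneg n (ne_of_gt hP)
  have hr1 : n % 2 ^ i < 2 ^ i := Int.emod_lt_of_pos n hP
  unfold tMap
  by_cases h : ∀ j < i, bin n j = true
  · rw [if_pos h]
    have hm : n % 2 ^ i = 2 ^ i - 1 := (allones n i).mp h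
    have hq : (n + 1) / 2 ^ i = n / 2 ^ i + 1 := by
      have heq : n + 1 = 2 ^ i * (n / 2 ^ i + 1) := by rw [mul_add]; linarith
      rw [heq, Int.mul_ediv_cancel_left _ (ne_of_gt hP)]
    rw [bin_eq, bin_eq, hq]
    rcases Int.emod_two_eq (n / 2 ^ i) with hd | hd
    · have h2 : (n / 2 ^ i + 1) % 2 = 1 := by omega
      simp [hd, h2]
    · have h2 : (n / 2 ^ i + 1) % 2 = 0 := by omega
      simp [hd, h2]
  · rw [if_neg h]
    have hm : n % 2 ^ i ≠ 2 ^ i - 1 := fun hc => h ((allones n i).mpr hc)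
    have hlt : n % 2 ^ i + 1 < 2 ^ i :=
      lt_of_le_of_ne (by linarith) (fun hc => hm (by linarith))
    have hq : (n + 1) / 2 ^ i = n / 2 ^ i := by
      have heq : n + 1 = (n % 2 ^ i + 1) + 2 ^ i * (n / 2 ^ i) := by linarith
      rw [heq, Int.add_mul_ediv_left _ _ (ne_of_gt hP),
        Int.ediv_eq_zero_of_lt (by linarith) hlt, zero_add]
    rw [bin_eq, bin_eq, hq]

private lemma pow_ediv_ediv (n : ℤ) (a b : ℕ) : n / 2 ^ a / 2 ^ b = n / 2 ^ (a + b) := by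
  have hA : (0:ℤ) < 2 ^ a := pow2pos a
  have hB : (0:ℤ) < 2 ^ b := pow2pos b
  have h1 : 2 ^ a * (n / 2 ^ a) + n % 2 ^ a = n := Int.mul_ediv_add_emod n (2 ^ a)
  have h2 : 2 ^ b * (n / 2 ^ a / 2 ^ b) + n / 2 ^ a % 2 ^ b = n / 2 ^ a :=
    Int.mul_ediv_add_emod _ (2 ^ b)
  have hr0 : 0 ≤ n % 2 ^ a := Int.emod_nonneg n (ne_of_gt hA)
  have hr1 : n % 2 ^ a < 2 ^ a := Int.emod_lt_of_pos n hA
  have ht0 : 0 ≤ n / 2 ^ a % 2 ^ b := Int.emod_nonneg _ (ne_of_gt hB)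
  have ht1 : n / 2 ^ a % 2 ^ b < 2 ^ b := Int.emod_lt_of_pos _ hB
  have hAB : (2:ℤ) ^ (a + b) = 2 ^ a * 2 ^ b := pow_add 2 a b
  have key : n = (2 ^ a * (n / 2 ^ a % 2 ^ b) + n % 2 ^ a)
      + 2 ^ (a + b) * (n / 2 ^ a / 2 ^ b) := by
    rw [hAB]
    linear_combination -h1 - (2:ℤ) ^ a * h2
  have hzero : (2 ^ a * (n / 2 ^ a % 2 ^ b) + n % 2 ^ a) / 2 ^ (a + b) = 0 :=
    Int.ediv_eq_zero_of_lt (by nlinarith) (by rw [hAB]; nlinarith)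
  conv_rhs => rw [key]
  rw [Int.add_mul_ediv_left _ _ (ne_of_gt (pow2pos (a + b))), hzero, zero_add]

private lemma bin_shift (n : ℤ) (a b : ℕ) : bin n (a + b) = bin (n / 2 ^ b) a := by
  rw [bin_eq, bin_eq, add_comm a b, ← pow_ediv_ediv]

private lemma bin_zero (i : ℕ) : bin 0 i = false := by
  simp [bin, Int.zero_fdiv]

/-- Under two's-complement binary encoding `bin : ℤ → {0,1}^ℕ`, the transducer-defined
transformations `t` and `u` act on codes of integers by `n ↦ n + 1`, respectively by
`0 ↦ 0` and `n ↦ n + 2^(v₂(n)+1)` for `n ≠ 0`.  Together with the injectivity of `bin`,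
this says that the Schreier graph of the action of `t, u` on the image of `bin` is
isomorphic to the long range graph. -/
theorem longrange_transducer_action :
    Function.Injective bin ∧
    (∀ n : ℤ, tMap (bin n) = bin (n + 1)) ∧
    uMap (bin 0) = bin 0 ∧
    (∀ n : ℤ, n ≠ 0 → uMap (bin n) = bin (n + 2 ^ (padicValInt 2 n + 1))) := by
  refine ⟨?_, fun n => t_bin n, ?_, ?_⟩
  · -- injectivity
    intro m n h
    have hmod : ∀ i : ℕ, m % 2 ^ i = n % 2 ^ i := by
      intro i
      induction i with
      | zero => simp
      | succ i ih =>
        have hb : bin m i = bin n i := by rw [h]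
        rw [bin_eq, bin_eq] at hb
        have hd : m / 2 ^ i % 2 = n / 2 ^ i % 2 := by
          rcases Int.emod_two_eq (m / 2 ^ i) with h1 | h1 <;>
            rcases Int.emod_two_eq (n / 2 ^ i) with h2 | h2 <;>
            simp [h1, h2] at hb ⊢
        rw [emod_succ, emod_succ, ih, hd]
    obtain ⟨i, hi⟩ := pow_unbounded_of_one_lt (R := ℤ) |m - n| one_lt_two
    have hdvd : (2:ℤ) ^ i ∣ m - n :=
      Int.dvd_of_emod_eq_zero (Int.emod_eq_emod_iff_emod_sub_eq_zero.mp (hmod i))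
    have := Int.eq_zero_of_abs_lt_dvd hdvd hi
    linarith
  · -- uMap (bin 0) = bin 0
    have h : ¬ ∃ i, bin 0 i = true := by
      rintro ⟨i, hi⟩
      rw [bin_zero] at hi
      exact Bool.false_ne_true hi
    funext k
    unfold uMap
    rw [dif_neg h]
  · -- uMap (bin n) for n ≠ 0
    intro n hn
    set v := padicValInt 2 n with hv
    have hdvd : (2:ℤ) ^ v ∣ n := by
      have := padicValInt_dvd (p := 2) n
      exact_mod_cast this
    have hndvd : ¬ (2:ℤ) ^ (v + 1) ∣ n := by
      intro hc
      have hc' : ((2:ℕ):ℤ) ^ (v + 1) ∣ n := by exact_mod_cast hc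
      rcases (padicValInt_dvd_iff (p := 2) (v + 1) n).mp hc' with h | h
      · exact hn h
      · omega
    obtain ⟨m, hm⟩ := hdvd
    have hmo : m % 2 = 1 := by
      rcases Int.emod_two_eq m with h | h
      · exfalso
        apply hndvd
        obtain ⟨c, hc⟩ := Int.dvd_of_emod_eq_zero h
        exact ⟨c, by rw [hm, hc, pow_succ]; ring⟩
      · exact h
    have hdig : ∀ i, bin n i = true ↔ (i = v ∨ (v < i ∧ bin n i = true)) := by
      intro i
      constructor
      · intro hbi
        rcases lt_trichotomy i v with hiv | hiv | hiv
        · exfalso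
          have hsplit : n / 2 ^ i = 2 * (2 ^ (v - i - 1) * m) := by
            have h2v : (2:ℤ) ^ v = 2 ^ i * (2 * 2 ^ (v - i - 1)) := by
              have hvi : (2:ℤ) ^ v = 2 ^ (i + 1 + (v - i - 1)) := by congr 1; omega
              rw [hvi, pow_add, pow_add, pow_one]; ring
            have hnn : n = 2 ^ i * (2 * (2 ^ (v - i - 1) * m)) := by
              rw [hm, h2v]; ring
            rw [hnn, Int.mul_ediv_cancel_left _ (ne_of_gt (pow2pos i))]
          rw [bin_eq, hsplit] at hbi
          simp [Int.mul_emod_right] at hbi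
        · exact Or.inl hiv
        · exact Or.inr ⟨hiv, hbi⟩
      · rintro (rfl | ⟨_, hbi⟩)
        · have : n / 2 ^ v = m := by
            rw [hm, Int.mul_ediv_cancel_left _ (ne_of_gt (pow2pos v))]
          rw [bin_eq, this, hmo]
          simp
        · exact hbi
    have hbv : bin n v = true := (hdig v).mpr (Or.inl rfl)
    have hex : ∃ i, bin n i = true := ⟨v, hbv⟩
    have hfind : Nat.find hex = v := by
      rw [Nat.find_eq_iff]
      refine ⟨hbv, fun j hj hbj => ?_⟩
      rcases (hdig j).mp hbj with h | h
      · omega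
      · omega
    -- key div facts
    have hq : (n + 2 ^ (v + 1)) / 2 ^ (v + 1) = n / 2 ^ (v + 1) + 1 := by
      have : n + 2 ^ (v + 1) = n + 2 ^ (v + 1) * 1 := by ring
      rw [this, Int.add_mul_ediv_left _ _ (by positivity : (2:ℤ) ^ (v + 1) ≠ 0)]
    funext k
    unfold uMap
    rw [dif_pos hex, hfind]
    by_cases hk : k ≤ v
    · rw [if_pos hk]
      -- bin (n + 2^(v+1)) k = bin n k
      have hsplit : (2:ℤ) ^ (v + 1) = 2 ^ k * (2 * 2 ^ (v - k)) := by
        have hvk : (2:ℤ) ^ (v + 1) = 2 ^ (k + 1 + (v - k)) := by congr 1; omega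
        rw [hvk, pow_add, pow_add, pow_one]; ring
      have hdivk : (n + 2 ^ (v + 1)) / 2 ^ k = n / 2 ^ k + 2 * 2 ^ (v - k) := by
        rw [hsplit, Int.add_mul_ediv_left _ _ (ne_of_gt (pow2pos k))]
      rw [bin_eq, bin_eq, hdivk, Int.add_mul_emod_self_left]
    · rw [if_neg hk]
      have hfun : (fun j => bin n (j + (v + 1))) = bin (n / 2 ^ (v + 1)) := by
        funext j
        exact bin_shift n j (v + 1)
      rw [hfun, t_bin]
      have hk' : k = (k - (v + 1)) + (v + 1) := by omega
      conv_rhs => rw [hk']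
      rw [bin_shift, hq]
end

section
/- Let G be a finitely generated, self-similar, contracting, post-critically finite group with alphabet S and nucleus N, and for n ∈ ℕ let Γ_n be the 'tile Schreier graph' with vertex set S^n and an edge labelled g ∈ N from v to w whenever Φ(g, v) = (w, 1). Then for any two words u, v ∈ S^n, the tiles K_u and K_v of the associated self-similar structure intersect if and only if there exists g ∈ N with Φ(g, u) = (v, 1); equivalently, the tile adjacency graph of level n is the simple graph obtained from the Schreier graph of G acting on S^n by removing loops, combining multiple edges, and deleting every edge from u to v labelled g for which Φ(g, u) = (v, h) with h ≠ 1. -/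
/-!
Statement 16: tiles of the self-similar structure associated with a post-critically
finite self-similar group intersect exactly when some nucleus element maps one word to
the other with trivial residual state.
-/

namespace SSG

variable {G : Type} [Group G] {S : Type} [Fintype S]

/-- The image/state pair produced by `g` on the finite word `v`:
`Φ(g, uv) = (u'v', g'')` where `Φ(g,u) = (u',g')` and `Φ(g',v) = (v',g'')`. -/
def ssActWord (Φ : G → S → S × G) : G → List S → List S × G
  | g, [] => ([], g)
  | g, s :: v =>
    ((Φ g s).1 :: (ssActWord Φ (Φ g s).2 v).1, (ssActWord Φ (Φ g s).2 v).2)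

/-- The asymptotic equivalence relation on left-infinite words defining the digit tile
`T(G)`: `w ≈ w'` iff there is a left-infinite path in the nucleus ending at the identity
state whose input labels spell `w` and output labels spell `w'`.  (Index `k` denotes the
letter at position `-k-1`.) -/
def tileRel (Φ : G → S → S × G) (N : Finset G) (w w' : ℕ → S) : Prop :=
  ∃ g : ℕ → G, (∀ k, g k ∈ N) ∧ g 0 = 1 ∧ ∀ k, Φ (g (k + 1)) (w k) = (w' k, g k)

/-- The left-infinite word `w` followed by the finite word `v` (so the letter at position
`k` of the result, counting from the end, is the `k`-th letter of `v` from the end while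
`k < |v|`). -/
def extendWord (v : List S) (w : ℕ → S) : ℕ → S := fun k =>
  if h : k < v.length then v.reverse.get ⟨k, by simpa using h⟩ else w (k - v.length)

/-- The tile `K_v` inside the digit tile `T(G) = S^{-ℕ}/≈`: the image of the set of
left-infinite words ending in `v` under the coding map. -/
def tile (Φ : G → S → S × G) (N : Finset G) (v : List S) :
    Set (Quot (tileRel Φ N)) :=
  Set.range fun w : ℕ → S => Quot.mk (tileRel Φ N) (extendWord v w)

end SSG

namespace SSGAux
open SSG

variable {G : Type} [Group G] {S : Type} [Fintype S]
variable (Φ : G → S → S × G)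

lemma ssActWord_snd (g : G) (v : List S) : (ssActWord Φ g v).2 = ssStateWord Φ g v := by
  induction v generalizing g with
  | nil => rfl
  | cons s t ih => simp [ssActWord, ssStateWord, ih]

lemma ssActWord_length (g : G) (v : List S) : (ssActWord Φ g v).1.length = v.length := by
  induction v generalizing g with
  | nil => rfl
  | cons s t ih => simp [ssActWord, ih]

lemma ssStateWord_append (g : G) (a b : List S) :
    ssStateWord Φ g (a ++ b) = ssStateWord Φ (ssStateWord Φ g a) b := by
  induction a generalizing g with
  | nil => rfl
  | cons s t ih => simp [ssStateWord, ih]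

lemma ssStateWord_mem (N : Finset G) (hNclosed : ∀ g ∈ N, ∀ s : S, (Φ g s).2 ∈ N)
    (g : G) (hg : g ∈ N) (l : List S) : ssStateWord Φ g l ∈ N := by
  induction l generalizing g with
  | nil => exact hg
  | cons s t ih => exact ih _ (hNclosed g hg s)

/-- the step lemma -/
lemma ssActWord_step (g : G) (l : List S) (i : ℕ) (hi : i < l.length) :
    Φ (ssStateWord Φ g (l.take i)) l[i]
      = ((ssActWord Φ g l).1[i]'(by rw [ssActWord_length]; exact hi),
         ssStateWord Φ g (l.take (i + 1))) := by
  induction l generalizing g i with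
  | nil => simp at hi
  | cons s t ih =>
    cases i with
    | zero => simp [ssStateWord, ssActWord]
    | succ i =>
      simp only [List.take_succ_cons, List.getElem_cons_succ, ssStateWord, ssActWord]
      exact ih _ _ (by simpa using hi)

section Coc
variable (hone : ∀ s : S, Φ 1 s = (s, 1))
  (hcoc : ∀ (g h : G) (s : S),
    Φ (g * h) s = ((Φ g (Φ h s).1).1, (Φ g (Φ h s).1).2 * (Φ h s).2))

include hone in
lemma ssActWord_one (v : List S) : ssActWord Φ 1 v = (v, 1) := by
  induction v with
  | nil => rfl
  | cons s t ih => simp [ssActWord, hone, ih]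

include hcoc in
lemma ssActWord_mul (g h : G) (v : List S) :
    ssActWord Φ (g * h) v =
      ((ssActWord Φ g (ssActWord Φ h v).1).1,
        (ssActWord Φ g (ssActWord Φ h v).1).2 * (ssActWord Φ h v).2) := by
  induction v generalizing g h with
  | nil => rfl
  | cons s t ih => simp [ssActWord, hcoc, ih]

include hone hcoc in
lemma Φ_inv (g : G) (s : S) : Φ g⁻¹ (Φ g s).1 = (s, ((Φ g s).2)⁻¹) := by
  have h1 := hcoc g⁻¹ g s
  rw [inv_mul_cancel, hone] at h1
  have h2 : (Φ g⁻¹ (Φ g s).1).1 = s := by rw [Prod.ext_iff] at h1; exact h1.1.symm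
  have h3 : (Φ g⁻¹ (Φ g s).1).2 * (Φ g s).2 = 1 := by rw [Prod.ext_iff] at h1; exact h1.2.symm
  exact Prod.ext h2 (eq_inv_of_mul_eq_one_left h3)

include hone hcoc in
lemma ssActWord_inv (g : G) (v : List S) :
    ssActWord Φ g⁻¹ (ssActWord Φ g v).1 = (v, ((ssActWord Φ g v).2)⁻¹) := by
  have h1 := ssActWord_mul Φ hcoc g⁻¹ g v
  rw [inv_mul_cancel, ssActWord_one Φ hone] at h1
  have h2 : (ssActWord Φ g⁻¹ (ssActWord Φ g v).1).1 = v := by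
    rw [Prod.ext_iff] at h1; exact h1.1.symm
  have h3 : (ssActWord Φ g⁻¹ (ssActWord Φ g v).1).2 * (ssActWord Φ g v).2 = 1 := by
    rw [Prod.ext_iff] at h1; exact h1.2.symm
  exact Prod.ext h2 (eq_inv_of_mul_eq_one_left h3)

end Coc
end SSGAux
namespace SSGAux2
open SSG SSGAux

set_option linter.unusedSectionVars false

variable {G : Type} [Group G] {S : Type} [Fintype S]
variable (Φ : G → S → S × G)
  (hone : ∀ s : S, Φ 1 s = (s, 1))
  (hcoc : ∀ (g h : G) (s : S),
    Φ (g * h) s = ((Φ g (Φ h s).1).1, (Φ g (Φ h s).1).2 * (Φ h s).2))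
  (N : Finset G)
  (hNone : (1 : G) ∈ N)
  (hNclosed : ∀ g ∈ N, ∀ s : S, (Φ g s).2 ∈ N)
  (hNcontr : Contracting Φ N)
  (hNmin : ∀ N' : Finset G, Contracting Φ N' → N ⊆ N')

include hNone hNmin in
lemma S_nonempty : Nonempty S := by
  by_contra h
  have hc : Contracting Φ (∅ : Finset G) := by
    intro g
    refine ⟨1, fun v hv => ?_⟩
    cases v with
    | nil => simp at hv
    | cons s t => exact absurd ⟨s⟩ h
  exact absurd (hNmin ∅ hc hNone) (by simp)

include hone hcoc hNcontr hNmin in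
lemma nucleus_inv {g : G} (hg : g ∈ N) : g⁻¹ ∈ N := by
  classical
  have hc : Contracting Φ (N.image (·⁻¹)) := by
    intro x
    obtain ⟨n, hn⟩ := hNcontr x⁻¹
    refine ⟨n, fun v hv => ?_⟩
    have h1 := ssActWord_inv Φ hone hcoc x v
    have h2 : ssStateWord Φ x⁻¹ (ssActWord Φ x v).1 = (ssStateWord Φ x v)⁻¹ := by
      rw [← ssActWord_snd, h1, ← ssActWord_snd]
    have h3 : (ssStateWord Φ x v)⁻¹ ∈ N := by
      rw [← h2]; exact hn _ (by rw [ssActWord_length]; exact hv)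
    exact Finset.mem_image.2 ⟨_, h3, inv_inv _⟩
  obtain ⟨y, hy, hyg⟩ := Finset.mem_image.1 (hNmin _ hc hg)
  rw [← hyg, inv_inv]; exact hy

include hNclosed hNcontr hNmin in
lemma nucleus_pred {g : G} (hg : g ∈ N) : ∃ h ∈ N, ∃ s : S, (Φ h s).2 = g := by
  classical
  have hc : Contracting Φ (N.filter (fun x => ∃ h ∈ N, ∃ s : S, (Φ h s).2 = x)) := by
    intro x
    obtain ⟨n, hn⟩ := hNcontr x
    refine ⟨n + 1, fun v hv => ?_⟩
    have hne : v ≠ [] := by intro h; rw [h] at hv; simp at hv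
    have hsplit : v.dropLast ++ [v.getLast hne] = v := List.dropLast_append_getLast hne
    have h1 : ssStateWord Φ x v = (Φ (ssStateWord Φ x v.dropLast) (v.getLast hne)).2 := by
      conv_lhs => rw [← hsplit]
      rw [ssStateWord_append]
      rfl
    have h2 : ssStateWord Φ x v.dropLast ∈ N := by
      apply hn
      rw [List.length_dropLast]
      omega
    refine Finset.mem_filter.2 ⟨?_, _, h2, _, h1.symm⟩
    rw [h1]; exact hNclosed _ h2 _
  have := hNmin _ hc hg
  exact (Finset.mem_filter.1 this).2

include hNcontr in
lemma seq_mem_nucleus (F : Finset G) (g : ℕ → G) (w : ℕ → S)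
    (hF : ∀ k, g k ∈ F) (hstep : ∀ k, (Φ (g (k + 1)) (w k)).2 = g k) :
    ∀ k, g k ∈ N := by
  classical
  have hn : ∀ x : G, ∀ v : List S, (hNcontr x).choose ≤ v.length → ssStateWord Φ x v ∈ N :=
    fun x => (hNcontr x).choose_spec
  have key : ∀ j k : ℕ, ∃ l : List S, l.length = j ∧ ssStateWord Φ (g (k + j)) l = g k := by
    intro j
    induction j with
    | zero => intro k; exact ⟨[], rfl, rfl⟩
    | succ j ih =>
      intro k
      obtain ⟨l, hl, hsl⟩ := ih k
      refine ⟨w (k + j) :: l, by simp [hl], ?_⟩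
      show ssStateWord Φ (Φ (g (k + j + 1)) (w (k + j))).2 l = g k
      rw [hstep (k + j)]; exact hsl
  intro k
  obtain ⟨l, hl, hsl⟩ := key (F.sup (fun x => (hNcontr x).choose)) k
  rw [← hsl]
  apply hn
  rw [hl]
  exact Finset.le_sup (f := fun x => (hNcontr x).choose) (hF _)

end SSGAux2
namespace SSGAux3
open SSG SSGAux SSGAux2
open scoped Pointwise

set_option linter.unusedSectionVars false

variable {G : Type} [Group G] {S : Type} [Fintype S]
variable (Φ : G → S → S × G)
  (hone : ∀ s : S, Φ 1 s = (s, 1))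
  (hcoc : ∀ (g h : G) (s : S),
    Φ (g * h) s = ((Φ g (Φ h s).1).1, (Φ g (Φ h s).1).2 * (Φ h s).2))
  (N : Finset G)
  (hNone : (1 : G) ∈ N)
  (hNclosed : ∀ g ∈ N, ∀ s : S, (Φ g s).2 ∈ N)
  (hNcontr : Contracting Φ N)
  (hNmin : ∀ N' : Finset G, Contracting Φ N' → N ⊆ N')

include hone hNone in
lemma tileRel_refl (w : ℕ → S) : tileRel Φ N w w :=
  ⟨fun _ => 1, fun _ => hNone, rfl, fun k => hone (w k)⟩

include hone hcoc hNcontr hNmin in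
lemma tileRel_symm {w w' : ℕ → S} (h : tileRel Φ N w w') : tileRel Φ N w' w := by
  obtain ⟨g, hgN, hg0, hstep⟩ := h
  refine ⟨fun k => (g k)⁻¹, fun k => nucleus_inv Φ hone hcoc N hNcontr hNmin (hgN k),
    by simp [hg0], fun k => ?_⟩
  have h1 := Φ_inv Φ hone hcoc (g (k + 1)) (w k)
  rw [hstep k] at h1
  exact h1

include hcoc hNcontr in
lemma tileRel_trans {w w' w'' : ℕ → S} (h1 : tileRel Φ N w w') (h2 : tileRel Φ N w' w'') :
    tileRel Φ N w w'' := by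
  classical
  obtain ⟨h, hhN, hh0, hhstep⟩ := h1
  obtain ⟨g, hgN, hg0, hgstep⟩ := h2
  have hstep : ∀ k, Φ (g (k + 1) * h (k + 1)) (w k) = (w'' k, g k * h k) := by
    intro k
    rw [hcoc, hhstep k]
    simp only
    rw [hgstep k]
  refine ⟨fun k => g k * h k, ?_, by simp [hg0, hh0], hstep⟩
  exact seq_mem_nucleus Φ N hNcontr (N * N) _ w
    (fun k => Finset.mul_mem_mul (hgN k) (hhN k))
    (fun k => by rw [hstep k])

include hone hcoc hNone hNcontr hNmin in
lemma tileRel_equiv : Equivalence (tileRel Φ N) :=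
  ⟨tileRel_refl Φ hone N hNone,
   tileRel_symm Φ hone hcoc N hNcontr hNmin,
   tileRel_trans Φ hcoc N hNcontr⟩

end SSGAux3
namespace SSGAux4
open SSG

set_option linter.unusedSectionVars false

variable {G : Type} [Group G] {S : Type} [Fintype S]

lemma extendWord_lt (l : List S) (ξ : ℕ → S) (k : ℕ) (hk : k < l.length) :
    extendWord l ξ k = l[l.length - 1 - k]'(by omega) := by
  simp only [extendWord, dif_pos hk, List.get_eq_getElem]
  rw [List.getElem_reverse]

lemma extendWord_ge (l : List S) (ξ : ℕ → S) (k : ℕ) (hk : l.length ≤ k) :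
    extendWord l ξ k = ξ (k - l.length) := by
  simp only [extendWord, dif_neg (by omega : ¬ k < l.length)]

end SSGAux4
namespace SSGAux5
open SSG SSGAux SSGAux2 SSGAux3 SSGAux4

set_option linter.unusedSectionVars false

variable {G : Type} [Group G] {S : Type} [Fintype S]
variable (Φ : G → S → S × G)
  (N : Finset G)

/-- forward key: a tileRel between extended words gives a nucleus transition. -/
lemma forward_key {u v : List S} (huv : u.length = v.length) {ξ ξ' : ℕ → S}
    (hrel : tileRel Φ N (extendWord u ξ) (extendWord v ξ')) :
    ∃ g ∈ N, ssActWord Φ g u = (v, (1 : G)) := by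
  obtain ⟨h, hhN, hh0, hstep⟩ := hrel
  have claim : ∀ j, j ≤ u.length →
      ssActWord Φ (h j) (u.drop (u.length - j)) = (v.drop (u.length - j), 1) := by
    intro j
    induction j with
    | zero =>
      intro _
      rw [Nat.sub_zero, List.drop_length, huv, List.drop_length]
      simp [ssActWord, hh0]
    | succ j ih =>
      intro hj
      have hi : u.length - 1 - j < u.length := by omega
      have hi' : u.length - 1 - j < v.length := by omega
      have e1 : u.length - (j + 1) = u.length - 1 - j := by omega
      have e2 : u.length - 1 - j + 1 = u.length - j := by omega
      rw [e1, List.drop_eq_getElem_cons hi, List.drop_eq_getElem_cons hi']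
      have hW : extendWord u ξ j = u[u.length - 1 - j]'hi := extendWord_lt u ξ j (by omega)
      have hW' : extendWord v ξ' j = v[u.length - 1 - j]'hi' := by
        rw [extendWord_lt v ξ' j (by omega)]
        congr 1
        omega
      have hs := hstep j
      rw [hW, hW'] at hs
      show ((Φ (h (j+1)) (u[u.length - 1 - j]'hi)).1 ::
          (ssActWord Φ (Φ (h (j+1)) (u[u.length - 1 - j]'hi)).2 (u.drop (u.length - 1 - j + 1))).1,
          (ssActWord Φ (Φ (h (j+1)) (u[u.length - 1 - j]'hi)).2 (u.drop (u.length - 1 - j + 1))).2)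
        = _
      rw [hs, e2]
      have := ih (by omega)
      rw [this]
  have := claim u.length le_rfl
  simp only [Nat.sub_self, List.drop_zero] at this
  exact ⟨h u.length, hhN u.length, this⟩

end SSGAux5
namespace SSGAux6
open SSG SSGAux SSGAux2 SSGAux3 SSGAux4 Function

set_option linter.unusedSectionVars false

variable {G : Type} [Group G] {S : Type} [Fintype S]
variable (Φ : G → S → S × G)
  (N : Finset G)
  (hNone : (1 : G) ∈ N)
  (hNclosed : ∀ g ∈ N, ∀ s : S, (Φ g s).2 ∈ N)
  (hNcontr : Contracting Φ N)
  (hNmin : ∀ N' : Finset G, Contracting Φ N' → N ⊆ N')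

include hNone hNclosed hNcontr hNmin in
lemma backward_key {u v : List S} (huv : u.length = v.length) {g : G} (hgN : g ∈ N)
    (hact : ssActWord Φ g u = (v, (1 : G))) :
    ∃ ξ ξ' : ℕ → S, tileRel Φ N (extendWord u ξ) (extendWord v ξ') := by
  classical
  obtain ⟨s₀⟩ := S_nonempty Φ N hNone hNmin
  have hpred' : ∀ x : G, ∃ hs : G × S, x ∈ N → hs.1 ∈ N ∧ (Φ hs.1 hs.2).2 = x := by
    intro x
    by_cases hx : x ∈ N
    · obtain ⟨h, hh, s, hs⟩ := nucleus_pred Φ N hNclosed hNcontr hNmin hx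
      exact ⟨(h, s), fun _ => ⟨hh, hs⟩⟩
    · exact ⟨(1, s₀), fun h => absurd h hx⟩
  choose ps hps using hpred'
  set F : ℕ → G := fun j => (fun x => (ps x).1)^[j] g with hF
  have htail : ∀ j, F j ∈ N := by
    intro j
    induction j with
    | zero => exact hgN
    | succ j ih =>
      have : F (j + 1) = (ps (F j)).1 := by
        rw [hF]; exact Function.iterate_succ_apply' _ _ _
      rw [this]
      exact (hps _ ih).1
  set gs : ℕ → G := fun k =>
    if k ≤ u.length then ssStateWord Φ g (u.take (u.length - k)) else F (k - u.length)
    with hgs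
  refine ⟨fun j => (ps (F j)).2, fun j => (Φ (ps (F j)).1 (ps (F j)).2).1, gs, ?_, ?_, ?_⟩
  · -- membership
    intro k
    by_cases hk : k ≤ u.length
    · simp only [hgs, if_pos hk]
      exact ssStateWord_mem Φ N hNclosed g hgN _
    · simp only [hgs, if_neg hk]
      exact htail _
  · -- gs 0 = 1
    simp only [hgs]
    simp only [if_pos (Nat.zero_le _), Nat.sub_zero, List.take_length]
    rw [← ssActWord_snd, hact]
  · -- transitions
    intro k
    by_cases hk : k < u.length
    · have hi : u.length - 1 - k < u.length := by omega
      have e1 : u.length - (k + 1) = u.length - 1 - k := by omega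
      have e2 : u.length - 1 - k + 1 = u.length - k := by omega
      have g1 : gs (k + 1) = ssStateWord Φ g (u.take (u.length - 1 - k)) := by
        simp only [hgs]; simp only [if_pos (by omega : k + 1 ≤ u.length), e1]
      have g2 : gs k = ssStateWord Φ g (u.take (u.length - k)) := by
        simp only [hgs]; simp only [if_pos (by omega : k ≤ u.length)]
      rw [g1, g2, extendWord_lt u _ k hk, extendWord_lt v _ k (by omega)]
      rw [← e2]
      rw [ssActWord_step Φ g u (u.length - 1 - k) hi]
      refine Prod.ext ?_ rfl
      simp only
      have hv1 : (ssActWord Φ g u).1 = v := by rw [hact]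
      rw [List.getElem_of_eq hv1]
      congr 1
      omega
    · have hnk : u.length ≤ k := by omega
      have g1 : gs (k + 1) = (ps (F (k - u.length))).1 := by
        simp only [hgs, if_neg (by omega : ¬ k + 1 ≤ u.length)]
        rw [show k + 1 - u.length = (k - u.length) + 1 from by omega, hF]
        exact Function.iterate_succ_apply' _ _ _
      have g2 : gs k = F (k - u.length) := by
        rcases eq_or_lt_of_le hnk with h | h
        · subst h
          simp only [hgs, if_pos le_rfl, Nat.sub_self, List.take_zero]
          rfl
        · simp only [hgs]; simp only [if_neg (by omega : ¬ k ≤ u.length)]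
      have e1 : extendWord u (fun j => (ps (F j)).2) k = (ps (F (k - u.length))).2 :=
        extendWord_ge u _ k hnk
      have e2 : extendWord v (fun j => (Φ (ps (F j)).1 (ps (F j)).2).1) k
          = (Φ (ps (F (k - u.length))).1 (ps (F (k - u.length))).2).1 := by
        rw [extendWord_ge v _ k (by omega)]
        rw [show k - v.length = k - u.length from by omega]
      rw [g1, g2, e1, e2]
      exact Prod.ext rfl ((hps _ (htail _)).2)

end SSGAux6

open SSG in
/-- **Tiles intersect exactly along nucleus transitions with trivial residual state**
(Proposition 2.7): for a finitely generated bounded (post-critically finite) self-similar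
group `G` with nucleus `N`, and words `u, v ∈ S^n`, the tiles `K_u` and `K_v` of the
associated self-similar structure intersect if and only if some `g ∈ N` satisfies
`Φ(g, u) = (v, 1)`.  Equivalently, the tile adjacency graph of level `n` is the simple
graph obtained from the Schreier graph of `G` acting on `S^n` by removing loops, combining
multiple edges, and deleting every `g`-labelled edge from `u` to `v` with
`Φ(g,u) = (v,h)`, `h ≠ 1`. -/
theorem tiles_intersect_iff_nucleus_transition
    {G : Type} [Group G] {S : Type} [Fintype S]
    (Φ : G → S → S × G)
    (hone : ∀ s : S, Φ 1 s = (s, 1))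
    (hcoc : ∀ (g h : G) (s : S),
      Φ (g * h) s = ((Φ g (Φ h s).1).1, (Φ g (Φ h s).1).2 * (Φ h s).2))
    (hfaithful : ∀ g : G, (∀ ξ : ℕ → S, ssAct Φ g ξ = ξ) → g = 1)
    (hfg : Group.FG G)
    (N : Finset G)
    (hNone : (1 : G) ∈ N)
    (hNclosed : ∀ g ∈ N, ∀ s : S, (Φ g s).2 ∈ N)
    (hNcontr : Contracting Φ N)
    (hNmin : ∀ N' : Finset G, Contracting Φ N' → N ⊆ N')
    (hpcf : (postCritical Φ N).Finite) :
    ∀ u v : List S, u.length = v.length →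
      ((tile Φ N u ∩ tile Φ N v).Nonempty ↔
        ∃ g ∈ N, ssActWord Φ g u = (v, (1 : G))) := by
  intro u v huv
  constructor
  · rintro ⟨x, ⟨ξ, hx1⟩, ⟨ξ', hx2⟩⟩
    have heq : Quot.mk (tileRel Φ N) (extendWord u ξ)
        = Quot.mk (tileRel Φ N) (extendWord v ξ') := hx1.trans hx2.symm
    have hrel : tileRel Φ N (extendWord u ξ) (extendWord v ξ') :=
      ((SSGAux3.tileRel_equiv Φ hone hcoc N hNone hNcontr hNmin).eqvGen_iff).1 (Quot.eq.1 heq)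
    exact SSGAux5.forward_key Φ N huv hrel
  · rintro ⟨g, hgN, hact⟩
    obtain ⟨ξ, ξ', hrel⟩ := SSGAux6.backward_key Φ N hNone hNclosed hNcontr hNmin huv hgN hact
    exact ⟨Quot.mk _ (extendWord u ξ), ⟨ξ, rfl⟩, ⟨ξ', (Quot.sound hrel).symm⟩⟩
end
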